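/- arXiv:1003.4407 — 4 statements merged into one kernel-verified Lean document; each statement's English description precedes it below -/
import Mathlib

section
/- Let l be a positive integer with l ∉ {1,2,4,8}. Then there exists a primitive (l+2)-th root of unity q̃ in ℂ such that Re(q̃²) > Re(q̃). -/
open Real

lemma aux_root (n k : ℕ) (hn : 0 < n) (hcop : Nat.Coprime k n)
    (h1 : n < 3 * k) (h2 : 3 * k < 2 * n) :
    ∃ q : ℂ, IsPrimitiveRoot q n ∧ q.re < (q ^ 2).re := by
  have hnR : (0:ℝ) < n := by exact_mod_cast hn
  set θ : ℝ := 2 * π * k / n with hθ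
  have harg : (θ:ℂ) * Complex.I = 2 * ↑π * Complex.I * (↑k / ↑n) := by
    rw [hθ]
    push_cast
    have : (n:ℂ) ≠ 0 := by exact_mod_cast hn.ne'
    field_simp
  refine ⟨Complex.exp (θ * Complex.I), ?_, ?_⟩
  · rw [harg]
    exact Complex.isPrimitiveRoot_exp_of_coprime k n hn.ne' hcop
  · have hsq : Complex.exp (θ * Complex.I) ^ 2 = Complex.exp ((↑(2*θ):ℂ) * Complex.I) := by
      rw [← Complex.exp_nat_mul]
      push_cast
      ring_nf
    rw [hsq, Complex.exp_ofReal_mul_I_re, Complex.exp_ofReal_mul_I_re, Real.cos_two_mul]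
    have hπ : (0:ℝ) < π := Real.pi_pos
    have hθlb : 2 * π / 3 < θ := by
      rw [hθ, div_lt_div_iff₀ (by norm_num) hnR]
      have : (n:ℝ) < 3 * k := by exact_mod_cast h1
      nlinarith
    have hθub : θ < 4 * π / 3 := by
      rw [hθ, div_lt_div_iff₀ hnR (by norm_num)]
      have : (3:ℝ) * k < 2 * n := by exact_mod_cast h2
      nlinarith
    have habs : |θ - π| < π / 3 := by
      rw [abs_lt]; constructor <;> nlinarith
    have hcosabs : Real.cos (π/3) < Real.cos |θ - π| :=
      Real.cos_lt_cos_of_nonneg_of_le_pi (abs_nonneg _) (by nlinarith) habs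
    rw [Real.cos_pi_div_three, Real.cos_abs, Real.cos_sub_pi] at hcosabs
    nlinarith [Real.neg_one_le_cos θ]

/-- For a positive integer `l ∉ {1,2,4,8}` there exists a primitive `(l+2)`-th root of
unity `q̃` in `ℂ` with `Re(q̃²) > Re(q̃)`. -/
theorem stmt_2 (l : ℕ) (hl : 1 ≤ l) (hl' : l ∉ ({1, 2, 4, 8} : Set ℕ)) :
    ∃ q : ℂ, IsPrimitiveRoot q (l + 2) ∧ q.re < (q ^ 2).re := by
  simp only [Set.mem_insert_iff, Set.mem_singleton_iff, not_or] at hl'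
  obtain ⟨h1, h2, h4, h8⟩ := hl'
  set n := l + 2 with hn
  have hn3 : 3 ≤ n := by omega
  rcases Nat.even_or_odd n with ⟨m, hm⟩ | ⟨m, hm⟩
  · rcases Nat.even_or_odd m with ⟨t, ht⟩ | ⟨t, ht⟩
    · -- m even: k = m + 1
      have hm4 : 4 ≤ m := by omega
      refine aux_root n (m+1) (by omega) ?_ (by omega) (by omega)
      have hmc : Nat.Coprime (m+1) m := by
        simpa using (Nat.coprime_self_add_left (m := m) (n := 1))
      have h2c : Nat.Coprime (m+1) 2 := by
        rw [Nat.coprime_two_right]; exact ⟨t, by omega⟩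
      have hc := Nat.Coprime.mul_right h2c hmc
      have : Nat.Coprime (m+1) (2 * m) := by
        rwa [Nat.coprime_comm, Nat.Coprime, Nat.gcd_comm] at hc ⊢
      rwa [show 2 * m = n by omega] at this
    · -- m odd: k = m + 2
      have hm7 : 7 ≤ m := by omega
      refine aux_root n (m+2) (by omega) ?_ (by omega) (by omega)
      have hmc : Nat.Coprime (m+2) m := by
        rw [Nat.coprime_self_add_left, Nat.coprime_comm, Nat.coprime_two_right]
        exact ⟨t, by omega⟩
      have h2c : Nat.Coprime (m+2) 2 := by
        rw [Nat.coprime_two_right]; exact ⟨t+1, by omega⟩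
      have hc := Nat.Coprime.mul_right h2c hmc
      rwa [show 2 * m = n by omega] at hc
  · -- n odd: n = 2m+1, k = m+1
    have hm2 : 2 ≤ m := by omega
    refine aux_root n (m+1) (by omega) ?_ (by omega) (by omega)
    have hsucc : Nat.Coprime (n+1) n := by
      simpa using (Nat.coprime_self_add_left (m := n) (n := 1))
    exact Nat.Coprime.coprime_dvd_left ⟨2, by omega⟩ hsucc
end

section
/- Let q = exp(2πi/(l+2)) with l a positive integer not in {1,2,4,8}, and let M ∈ SL(2,ℂ) have trace 2 − q − q⁻¹ + q² + q⁻². Then M has infinite order in SL(2,ℂ). -/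
open Complex Matrix

/-- Existence of a residue `k` coprime to `n` lying strictly between `n/3` and `n/2`. -/
lemma exists_good_k (n : ℕ) (h5 : 5 ≤ n) (h6 : n ≠ 6) (h10 : n ≠ 10) :
    ∃ k : ℕ, Nat.Coprime k n ∧ n < 3 * k ∧ 2 * k < n := by
  rcases Nat.even_or_odd n with he | ho
  · obtain ⟨m, rfl⟩ := he
    rcases Nat.even_or_odd m with hme | hmo
    · obtain ⟨s, rfl⟩ := hme
      refine ⟨s + s - 1, ?_, by omega, by omega⟩
      have hd1 : Nat.gcd (s + s - 1) (s + s + (s + s)) ∣ s + s - 1 := Nat.gcd_dvd_left _ _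
      have hd2 : Nat.gcd (s + s - 1) (s + s + (s + s)) ∣ s + s + (s + s) :=
        Nat.gcd_dvd_right _ _
      have hd3 : Nat.gcd (s + s - 1) (s + s + (s + s)) ∣
          (s + s + (s + s)) - 2 * (s + s - 1) := Nat.dvd_sub hd2 (hd1.mul_left 2)
      have h2 : (s + s + (s + s)) - 2 * (s + s - 1) = 2 := by omega
      rw [h2] at hd3
      have hle := Nat.le_of_dvd (by omega) hd3
      have hpos : 0 < Nat.gcd (s + s - 1) (s + s + (s + s)) := Nat.gcd_pos_of_pos_right _ (by omega)
      interval_cases h : Nat.gcd (s + s - 1) (s + s + (s + s))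
      · exact h
      · omega
    · obtain ⟨s, rfl⟩ := hmo
      refine ⟨2 * s + 1 - 2, ?_, by omega, by omega⟩
      set t := (2 * s + 1) + (2 * s + 1) with ht
      have hd1 : Nat.gcd (2 * s + 1 - 2) t ∣ 2 * s + 1 - 2 := Nat.gcd_dvd_left _ _
      have hd2 : Nat.gcd (2 * s + 1 - 2) t ∣ t := Nat.gcd_dvd_right _ _
      have hd3 : Nat.gcd (2 * s + 1 - 2) t ∣ t - 2 * (2 * s + 1 - 2) :=
        Nat.dvd_sub hd2 (hd1.mul_left 2)
      have h2 : t - 2 * (2 * s + 1 - 2) = 4 := by omega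
      rw [h2] at hd3
      have hle := Nat.le_of_dvd (by norm_num) hd3
      have hpos : 0 < Nat.gcd (2 * s + 1 - 2) t := Nat.gcd_pos_of_pos_right _ (by omega)
      interval_cases h : Nat.gcd (2 * s + 1 - 2) t
      · exact h
      · omega
      · omega
      · omega
  · obtain ⟨m, rfl⟩ := ho
    refine ⟨m, ?_, by omega, by omega⟩
    have hd1 : Nat.gcd m (2 * m + 1) ∣ m := Nat.gcd_dvd_left _ _
    have hd2 : Nat.gcd m (2 * m + 1) ∣ 2 * m + 1 := Nat.gcd_dvd_right _ _
    have hd3 : Nat.gcd m (2 * m + 1) ∣ (2 * m + 1) - 2 * m := Nat.dvd_sub hd2 (hd1.mul_left 2)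
    simpa using hd3

lemma aux_exp_add_inv (x : ℝ) :
    Complex.exp (x * I) + (Complex.exp (x * I))⁻¹ = 2 * Real.cos x := by
  rw [← Complex.exp_neg, show -((x : ℂ) * I) = (-x : ℂ) * I by ring, Complex.exp_mul_I,
    Complex.exp_mul_I, Complex.cos_neg, Complex.sin_neg, Complex.ofReal_cos]
  ring

set_option maxHeartbeats 1000000 in
/-- For `q = exp(2πi/(l+2))` with `l ∉ {1,2,4,8}`, any `M ∈ SL(2,ℂ)` of trace
`2 - q - q⁻¹ + q² + q⁻²` has infinite order. -/
theorem stmt_4 (l : ℕ) (hl : 1 ≤ l) (hl' : l ∉ ({1, 2, 4, 8} : Set ℕ)) (q : ℂ)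
    (hq : q = Complex.exp (2 * Real.pi * I / (l + 2)))
    (M : Matrix (Fin 2) (Fin 2) ℂ) (hdet : M.det = 1)
    (htr : M.trace = 2 - q - q⁻¹ + q ^ 2 + (q ^ 2)⁻¹) :
    ∀ n : ℕ, 0 < n → M ^ n ≠ 1 := by
  intro n₀ hn₀ hMn
  have hlnot : l ≠ 1 ∧ l ≠ 2 ∧ l ≠ 4 ∧ l ≠ 8 := by simpa using hl'
  set n : ℕ := l + 2 with hn
  have h5 : 5 ≤ n := by omega
  obtain ⟨k, hkcop, hk3, hk2⟩ := exists_good_k n h5 (by omega) (by omega)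
  -- eigenvalue of M
  obtain ⟨lam, hlam⟩ :=
    Module.End.exists_eigenvalue (Matrix.mulVecLin M : Module.End ℂ (Fin 2 → ℂ))
  obtain ⟨v, hv⟩ := hlam.exists_hasEigenvector
  have hvne : v ≠ 0 := hv.2
  have hMv : M.mulVec v = lam • v := by
    have := hv.apply_eq_smul
    rwa [Matrix.mulVecLin_apply] at this
  have key : ∀ m : ℕ, (M ^ m).mulVec v = lam ^ m • v := by
    intro m
    induction m with
    | zero => simp
    | succ i ih =>
      rw [pow_succ, pow_succ, ← Matrix.mulVec_mulVec, hMv, Matrix.mulVec_smul, ih, smul_smul,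
        mul_comm]
  have hpow : lam ^ n₀ = 1 := by
    have h1 := key n₀
    rw [hMn, Matrix.one_mulVec] at h1
    have h2 : (lam ^ n₀ - 1) • v = 0 := by rw [sub_smul, one_smul, ← h1, sub_self]
    rcases smul_eq_zero.mp h2 with h | h
    · exact sub_eq_zero.mp h
    · exact absurd h hvne
  have hlam0 : lam ≠ 0 := by
    intro h
    rw [h, zero_pow hn₀.ne'] at hpow
    exact zero_ne_one hpow
  -- quadratic relation
  have hdet0 : (M - lam • 1).det = 0 := by
    rw [← Matrix.exists_mulVec_eq_zero_iff]
    refine ⟨v, hvne, ?_⟩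
    rw [Matrix.sub_mulVec, Matrix.smul_mulVec, Matrix.one_mulVec, hMv, sub_self]
  have hquad : lam ^ 2 - M.trace * lam + 1 = 0 := by
    rw [Matrix.trace_fin_two]
    rw [Matrix.det_fin_two] at hdet
    simp [Matrix.det_fin_two, Matrix.one_fin_two] at hdet0
    linear_combination hdet0 - hdet
  have htlam : M.trace = lam + lam⁻¹ := by
    field_simp
    linear_combination -hquad
  -- setting up roots of unity
  have hN0 : 0 < n * n₀ := by positivity
  set N : ℕ := n * n₀ with hNdef
  haveI : NeZero N := ⟨hN0.ne'⟩
  set μ : ℂ := Complex.exp (2 * Real.pi * I / N) with hμdef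
  have hμprim : IsPrimitiveRoot μ N := Complex.isPrimitiveRoot_exp N hN0.ne'
  have hqn : q = Complex.exp (2 * Real.pi * I / n) := by
    rw [hq]
    norm_num [hn]
  have hqprim : IsPrimitiveRoot q n := by
    rw [hqn]; exact Complex.isPrimitiveRoot_exp n (by omega)
  have hnC : (n : ℂ) ≠ 0 := Nat.cast_ne_zero.mpr (by omega)
  have hn₀C : (n₀ : ℂ) ≠ 0 := Nat.cast_ne_zero.mpr hn₀.ne'
  have hμq : μ ^ n₀ = q := by
    rw [hμdef, hqn, ← Complex.exp_nat_mul]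
    congr 1
    have hNC : (N : ℂ) = (n : ℂ) * (n₀ : ℂ) := by push_cast [hNdef]; ring
    rw [hNC]
    field_simp
  have hlamN : lam ^ N = 1 := by rw [hNdef, mul_comm, pow_mul, hpow, one_pow]
  obtain ⟨j, -, hj⟩ := hμprim.eq_pow_of_pow_eq_one hlamN
  -- lift k to a residue coprime to N
  have hdvd : n ∣ N := ⟨n₀, rfl⟩
  obtain ⟨u', hu'⟩ := ZMod.unitsMap_surjective hdvd (ZMod.unitOfCoprime k hkcop)
  set k' : ℕ := (u' : ZMod N).val with hk'def
  have hk'cop : Nat.Coprime k' N := ZMod.val_coe_unit_coprime u'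
  have hmodeq : k' % n = k % n := by
    have h1 : ((k' : ℕ) : ZMod n) = (k : ZMod n) := by
      calc ((k' : ℕ) : ZMod n)
          = ZMod.castHom hdvd (ZMod n) ((k' : ℕ) : ZMod N) := (map_natCast _ _).symm
        _ = ZMod.castHom hdvd (ZMod n) (u' : ZMod N) := by
            rw [hk'def, ZMod.natCast_val, ZMod.cast_id]
        _ = ((ZMod.unitsMap hdvd u' : (ZMod n)ˣ) : ZMod n) := rfl
        _ = (k : ZMod n) := by rw [hu', ZMod.coe_unitOfCoprime]
    exact (ZMod.natCast_eq_natCast_iff _ _ _).mp h1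
  have hq_pow_n : q ^ n = 1 := hqprim.pow_eq_one
  have hmm : ∀ a : ℕ, q ^ a = q ^ (a % n) := by
    intro a
    conv_lhs => rw [← Nat.div_add_mod a n]
    rw [pow_add, pow_mul, hq_pow_n, one_pow, one_mul]
  have hqk : q ^ k' = q ^ k := by rw [hmm k', hmm k]; exact congrArg (q ^ ·) hmodeq
  -- the embedding of ℚ(μ) sending μ to μ^k'
  have hint : IsIntegral ℚ μ :=
    ⟨Polynomial.X ^ N - 1, Polynomial.monic_X_pow_sub_C 1 hN0.ne', by
      simp [hμprim.pow_eq_one]⟩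
  open IntermediateField in
  set g : ℚ⟮μ⟯ := IntermediateField.AdjoinSimple.gen ℚ μ with hgdef
  have hcyc : (Polynomial.aeval (μ ^ k'))
      (minpoly ℚ (IntermediateField.adjoin.powerBasis hint).gen) = 0 := by
    rw [IntermediateField.adjoin.powerBasis_gen]
    erw [IntermediateField.minpoly_gen]
    rw [
      ← Polynomial.cyclotomic_eq_minpoly_rat hμprim hN0]
    have h := (hμprim.pow_of_coprime k' hk'cop).isRoot_cyclotomic hN0
    simpa [Polynomial.aeval_def, Polynomial.eval₂_eq_eval_map, Polynomial.IsRoot.def,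
      Polynomial.map_cyclotomic] using h
  set φ0 := (IntermediateField.adjoin.powerBasis hint).lift (μ ^ k') hcyc with hφ0def
  have hφg : φ0 g = μ ^ k' :=
    (IntermediateField.adjoin.powerBasis hint).lift_gen (μ ^ k') hcyc
  have hinj : Function.Injective ((↑) : (ℚ⟮μ⟯ : IntermediateField ℚ ℂ) → ℂ) :=
    Subtype.coe_injective
  have hgcoe : (g : ℂ) = μ := rfl
  set lamK : ℚ⟮μ⟯ := g ^ j with hlamKdef
  set qK : ℚ⟮μ⟯ := g ^ n₀ with hqKdef
  have hlamKcoe : (lamK : ℂ) = lam := by push_cast [hlamKdef, hgcoe, hj]; try rfl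
  have hqKcoe : (qK : ℂ) = q := by push_cast [hqKdef, hgcoe, hμq]; try rfl
  have hkey : lamK + lamK⁻¹ = 2 - qK - qK⁻¹ + qK ^ 2 + (qK ^ 2)⁻¹ := by
    apply hinj
    push_cast [IntermediateField.coe_inv, hlamKcoe, hqKcoe]
    rw [← htlam, htr, show ((2 : (ℚ⟮μ⟯ : IntermediateField ℚ ℂ)) : ℂ) = 2 from rfl]
  have hlamKN : lamK ^ N = 1 := by
    apply hinj
    push_cast [hlamKdef, hgcoe]
    rw [← pow_mul, mul_comm, pow_mul, hμprim.pow_eq_one, one_pow]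
  have hrootN : (φ0 lamK) ^ N = 1 := by rw [← map_pow, hlamKN, _root_.map_one]
  have habs1 : ‖(φ0 lamK)‖ = 1 := by
    have := Complex.norm_eq_one_of_pow_eq_one hrootN hN0.ne'
    simpa using this
  have habs : ‖(φ0 (lamK + lamK⁻¹))‖ ≤ 2 := by
    rw [map_add, map_inv₀]
    calc ‖(φ0 lamK + (φ0 lamK)⁻¹)‖
        ≤ ‖(φ0 lamK)‖ + ‖(φ0 lamK)⁻¹‖ := norm_add_le _ _
      _ = 2 := by rw [norm_inv, habs1]; norm_num
  -- computing the image of the trace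
  have hφq : φ0 qK = q ^ k := by
    rw [hqKdef, map_pow, hφg, ← pow_mul, mul_comm, pow_mul, hμq, hqk]
  set θ : ℝ := 2 * Real.pi * k / n with hθdef
  have hqk_exp : q ^ k = Complex.exp ((θ : ℂ) * I) := by
    rw [hqn, ← Complex.exp_nat_mul]
    congr 1
    push_cast [hθdef]
    field_simp
  have hq2k_exp : (q ^ k) ^ 2 = Complex.exp (((2 * θ : ℝ) : ℂ) * I) := by
    rw [hqk_exp, ← Complex.exp_nat_mul]
    congr 1
    push_cast
    ring
  have hw : (μ ^ k') ^ n₀ = Complex.exp ((θ:ℂ) * I) := by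
    rw [← pow_mul, mul_comm k' n₀, pow_mul, hμq, hqk, hqk_exp]
  have hφt : φ0 (2 - qK - qK⁻¹ + qK ^ 2 + (qK ^ 2)⁻¹) =
      ((2 - 2 * Real.cos θ + 2 * Real.cos (2 * θ) : ℝ) : ℂ) := by
    have h1 := aux_exp_add_inv θ
    have h2 := aux_exp_add_inv (2 * θ)
    have hsq : Complex.exp ((θ:ℂ) * I) ^ 2 = Complex.exp (((2 * θ : ℝ) : ℂ) * I) := by
      rw [← Complex.exp_nat_mul]; congr 1; push_cast; ring
    simp only [map_add, map_sub, map_inv₀, map_pow, map_ofNat, hqKdef, hφg, hw, hsq]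
    push_cast at h1 h2 ⊢
    linear_combination h2 - h1
  -- the contradiction
  have hnR : (0 : ℝ) < n := by positivity
  have hπ := Real.pi_pos
  have hθ1 : 2 * Real.pi / 3 < θ := by
    rw [hθdef, div_lt_div_iff₀ (by norm_num) hnR]
    have : (n : ℝ) < 3 * k := by exact_mod_cast hk3
    nlinarith
  have hθ2 : θ < Real.pi := by
    rw [hθdef, div_lt_iff₀ hnR]
    have : (2 * k : ℝ) < n := by exact_mod_cast hk2
    nlinarith
  have hc : Real.cos θ < -(1 / 2) := by
    have h1 : Real.cos θ < Real.cos (2 * Real.pi / 3) :=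
      Real.cos_lt_cos_of_nonneg_of_le_pi (by positivity) hθ2.le hθ1
    have h2 : Real.cos (2 * Real.pi / 3) = -(1 / 2) := by
      rw [show (2 * Real.pi / 3 : ℝ) = Real.pi - Real.pi / 3 by ring, Real.cos_pi_sub,
        Real.cos_pi_div_three]
    linarith
  have hfinal : ‖(((2 - 2 * Real.cos θ + 2 * Real.cos (2 * θ) : ℝ) : ℂ))‖ ≤ 2 := by
    rw [← hφt, ← hkey]
    exact habs
  rw [Complex.norm_real, Real.norm_eq_abs] at hfinal
  have hle : (2 - 2 * Real.cos θ + 2 * Real.cos (2 * θ) : ℝ) ≤ 2 :=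
    (abs_le.mp hfinal).2
  rw [Real.cos_two_mul] at hle
  nlinarith [hc, sq_nonneg (Real.cos θ)]
end

section
/- Let q = exp(2πi/4) = i (the case l = 2) and t = sqrt(q(1+q+q²)). Then the images in PGL(2,ℂ) of m₁ = BA⁻²B and m₂ = B², where A = q^{-3/4}·diag(q,−1) and B = (q^{-3/4}/(q+1))·[[−1,t],[t,q²]], generate a group isomorphic to the Klein four group ℤ/2 × ℤ/2. -/
open Complex Matrix

/-- `PGL(2,ℂ)` as the quotient of `GL(2,ℂ)` by its center (the scalar matrices). -/
abbrev PGL2 : Type := GL (Fin 2) ℂ ⧸ Subgroup.center (GL (Fin 2) ℂ)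

section Aux

/-- A monoid hom from `Multiplicative (ZMod 2)` determined by an element of order dividing 2. -/
def homOfOrderTwo {G : Type*} [Group G] (g : G) (hg : g * g = 1) :
    Multiplicative (ZMod 2) →* G where
  toFun a := g ^ (Multiplicative.toAdd a).val
  map_one' := by simp
  map_mul' a b := by
    have h2 : ∀ x : ZMod 2, x = 0 ∨ x = 1 := by decide
    have key : ∀ x y : ZMod 2, g ^ (x + y).val = g ^ x.val * g ^ y.val := by
      intro x y
      rcases h2 x with rfl | rfl <;> rcases h2 y with rfl | rfl <;>
        simp [show ((1:ZMod 2)+1) = 0 by decide, show ((1:ZMod 2)).val = 1 from rfl,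
          show ((0:ZMod 2)).val = 0 from rfl, hg]
    simpa using key (Multiplicative.toAdd a) (Multiplicative.toAdd b)

lemma homOfOrderTwo_apply {G : Type*} [Group G] (g : G) (hg : g * g = 1)
    (a : Multiplicative (ZMod 2)) :
    homOfOrderTwo g hg a = g ^ (Multiplicative.toAdd a).val := rfl

lemma central_of_scalar (r : ℂ) (u : GL (Fin 2) ℂ)
    (hu : (u : Matrix (Fin 2) (Fin 2) ℂ) = r • 1) :
    u ∈ Subgroup.center (GL (Fin 2) ℂ) := by
  rw [Subgroup.mem_center_iff]
  intro g
  refine Units.ext ?_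
  show (g : Matrix (Fin 2) (Fin 2) ℂ) * u = (u : Matrix (Fin 2) (Fin 2) ℂ) * g
  rw [hu, Matrix.mul_smul, Matrix.smul_mul, mul_one, one_mul]

lemma inv_val (u : GL (Fin 2) ℂ) (M : Matrix (Fin 2) (Fin 2) ℂ)
    (h : (u : Matrix (Fin 2) (Fin 2) ℂ) * M = 1) :
    ((u⁻¹ : GL (Fin 2) ℂ) : Matrix (Fin 2) (Fin 2) ℂ) = M := by
  calc ((u⁻¹ : GL (Fin 2) ℂ) : Matrix (Fin 2) (Fin 2) ℂ)
      = ((u⁻¹ : GL (Fin 2) ℂ) : Matrix (Fin 2) (Fin 2) ℂ)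
          * ((u : Matrix (Fin 2) (Fin 2) ℂ) * M) := by rw [h, mul_one]
    _ = (((u⁻¹ * u : GL (Fin 2) ℂ)) : Matrix (Fin 2) (Fin 2) ℂ) * M := by
        rw [Units.val_mul, mul_assoc]
    _ = M := by rw [inv_mul_cancel]; simp

lemma hI2' : (I:ℂ)^2 = -1 := Complex.I_sq
lemma hI3' : (I:ℂ)^3 = -I := by rw [pow_succ, hI2']; ring
lemma hI4' : (I:ℂ)^4 = 1 := by rw [pow_succ, hI3']; simp [Complex.I_mul_I]

section Mats

lemma mat_inv (c : ℂ) (hc0 : c ≠ 0) :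
    (c • !![I, 0; 0, -1]) * (c⁻¹ • !![-I, 0; 0, -1]) = (1 : Matrix (Fin 2) (Fin 2) ℂ) := by
  ext i j
  fin_cases i <;> fin_cases j
  all_goals simp [Matrix.mul_apply, Fin.sum_univ_two, Matrix.one_apply]
  all_goals try field_simp
  all_goals try ring_nf
  all_goals try simp only [hI2', hI3', hI4']
  all_goals try ring_nf
  all_goals try field_simp
  all_goals try ring

lemma mat_m1 (t c : ℂ) (hc0 : c ≠ 0) (ht2 : t^2 = -1) (h1I : (1+I:ℂ) ≠ 0) :
    ((c / (1 + I)) • !![-1, t; t, -1]) *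
      ((c⁻¹ • !![-I, 0; 0, -1]) * (c⁻¹ • !![-I, 0; 0, -1])) *
      ((c / (1 + I)) • !![-1, t; t, -1]) = (-I) • !![(-1:ℂ), 0; 0, 1] := by
  have ht3 : t^3 = -t := by rw [pow_succ, ht2]; ring
  have ht4 : t^4 = 1 := by rw [pow_succ, ht3]; linear_combination -ht2
  ext i j
  fin_cases i <;> fin_cases j
  all_goals simp [Matrix.mul_apply, Fin.sum_univ_two]
  all_goals try field_simp
  all_goals try ring_nf
  all_goals try simp only [hI2', hI3', hI4', ht2, ht3, ht4]
  all_goals try ring_nf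
  all_goals try field_simp
  all_goals try ring

lemma mat_m2 (t c : ℂ) (hc0 : c ≠ 0) (ht2 : t^2 = -1) (h1I : (1+I:ℂ) ≠ 0) :
    ((c / (1 + I)) • !![-1, t; t, -1]) ^ 2
      = (-2 * t * c ^ 2 / (1 + I) ^ 2) • !![(0:ℂ), 1; 1, 0] := by
  have ht3 : t^3 = -t := by rw [pow_succ, ht2]; ring
  have ht4 : t^4 = 1 := by rw [pow_succ, ht3]; linear_combination -ht2
  rw [pow_two]
  ext i j
  fin_cases i <;> fin_cases j
  all_goals simp [Matrix.mul_apply, Fin.sum_univ_two]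
  all_goals try field_simp
  all_goals try ring_nf
  all_goals try simp only [hI2', hI3', hI4', ht2, ht3, ht4]
  all_goals try ring_nf
  all_goals try field_simp
  all_goals try ring

lemma mat_m1sq :
    ((-I) • !![(-1:ℂ), 0; 0, 1]) * ((-I) • !![(-1:ℂ), 0; 0, 1])
      = (-1 : ℂ) • (1 : Matrix (Fin 2) (Fin 2) ℂ) := by
  ext i j
  fin_cases i <;> fin_cases j
  all_goals simp [Matrix.mul_apply, Fin.sum_univ_two, Matrix.one_apply]
  all_goals try simp [Complex.I_mul_I]

lemma mat_m2sq (k : ℂ) :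
    (k • !![(0:ℂ), 1; 1, 0]) * (k • !![(0:ℂ), 1; 1, 0])
      = (k ^ 2) • (1 : Matrix (Fin 2) (Fin 2) ℂ) := by
  ext i j
  fin_cases i <;> fin_cases j
  all_goals simp [Matrix.mul_apply, Fin.sum_univ_two, Matrix.one_apply]
  all_goals ring

lemma mat_comm (k : ℂ) :
    (k • !![(0:ℂ), 1; 1, 0]) * ((-I) • !![(-1:ℂ), 0; 0, 1])
      = -(((-I) • !![(-1:ℂ), 0; 0, 1]) * (k • !![(0:ℂ), 1; 1, 0])) := by
  ext i j
  fin_cases i <;> fin_cases j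
  all_goals simp [Matrix.mul_apply, Fin.sum_univ_two]
  all_goals ring

lemma mat_m12 (k : ℂ) :
    ((-I) • !![(-1:ℂ), 0; 0, 1]) * (k • !![(0:ℂ), 1; 1, 0])
      = (I * k) • !![(0:ℂ), 1; -1, 0] := by
  ext i j
  fin_cases i <;> fin_cases j
  all_goals simp [Matrix.mul_apply, Fin.sum_univ_two]
  all_goals ring

end Mats


section Klein
variable {G : Type*} [Group G] (x y : G) (hx : x * x = 1) (hy : y * y = 1) (h : Commute x y)

/-- The homomorphism from the Klein four group determined by two commuting involutions. -/
def kleinHom : Multiplicative (ZMod 2) × Multiplicative (ZMod 2) →* G :=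
  (homOfOrderTwo x hx).noncommCoprod (homOfOrderTwo y hy) (fun _ _ => Commute.pow_pow h _ _)

lemma kleinHom_apply (p : Multiplicative (ZMod 2) × Multiplicative (ZMod 2)) :
    kleinHom x y hx hy h p = homOfOrderTwo x hx p.1 * homOfOrderTwo y hy p.2 := rfl

lemma kleinHom_injective (hx1 : x ≠ 1) (hy1 : y ≠ 1) (hxy1 : x * y ≠ 1) :
    Function.Injective (kleinHom x y hx hy h) := by
  rw [injective_iff_map_eq_one]
  rintro ⟨a, b⟩ hab
  have h2 : ∀ u : Multiplicative (ZMod 2), u = 1 ∨ u = Multiplicative.ofAdd 1 := by decide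
  rcases h2 a with rfl | rfl <;> rcases h2 b with rfl | rfl <;>
    simp only [kleinHom_apply, homOfOrderTwo_apply, toAdd_one,
      toAdd_ofAdd, ZMod.val_zero, show ((1:ZMod 2)).val = 1 from rfl, pow_zero, pow_one,
      one_mul, mul_one] at hab
  · rfl
  · exact absurd hab hy1
  · exact absurd hab hx1
  · exact absurd hab hxy1

lemma kleinHom_range : (kleinHom x y hx hy h).range = Subgroup.closure {x, y} := by
  apply le_antisymm
  · rintro z ⟨⟨a, b⟩, rfl⟩
    have happ : kleinHom x y hx hy h (a, b)
        = x ^ (Multiplicative.toAdd a).val * y ^ (Multiplicative.toAdd b).val := rfl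
    rw [happ]
    apply Subgroup.mul_mem
    · apply Subgroup.pow_mem
      apply Subgroup.subset_closure
      exact Set.mem_insert _ _
    · apply Subgroup.pow_mem
      apply Subgroup.subset_closure
      exact Set.mem_insert_of_mem _ rfl
  · rw [Subgroup.closure_le]
    rintro z hz
    simp only [Set.mem_insert_iff, Set.mem_singleton_iff] at hz
    rcases hz with rfl | rfl
    · exact ⟨(Multiplicative.ofAdd 1, 1), by
        simp [kleinHom_apply, homOfOrderTwo_apply,
          show ((1:ZMod 2)).val = 1 from rfl]⟩
    · exact ⟨(1, Multiplicative.ofAdd 1), by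
        simp [kleinHom_apply, homOfOrderTwo_apply,
          show ((1:ZMod 2)).val = 1 from rfl]⟩

end Klein

end Aux

set_option maxHeartbeats 2000000 in
/-- At level `l = 2` (so `q = i`), the images in `PGL(2,ℂ)` of `m₁ = BA⁻²B` and
`m₂ = B²` generate a group isomorphic to the Klein four group `ℤ/2 × ℤ/2`. -/
theorem stmt_8 (q t c : ℂ)
    (hq : q = Complex.exp (2 * Real.pi * I / 4))
    (ht : t ^ 2 = q * (1 + q + q ^ 2))
    (hc : c = Complex.exp (2 * Real.pi * I / 4 * (-3 / 4)))
    (A B : GL (Fin 2) ℂ)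
    (hA : (A : Matrix (Fin 2) (Fin 2) ℂ) = c • !![q, 0; 0, -1])
    (hB : (B : Matrix (Fin 2) (Fin 2) ℂ) = (c / (q + 1)) • !![-1, t; t, q ^ 2]) :
    Nonempty
      ((Subgroup.closure {((B * A⁻¹ ^ 2 * B : GL (Fin 2) ℂ) : PGL2),
          ((B ^ 2 : GL (Fin 2) ℂ) : PGL2)} : Subgroup PGL2) ≃*
        (Multiplicative (ZMod 2) × Multiplicative (ZMod 2))) := by
  -- scalar facts
  have hqI : q = I := by
    rw [hq, show (2 * Real.pi * I / 4 : ℂ) = (Real.pi/2 : ℝ) * I by push_cast; ring,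
      Complex.exp_mul_I]
    simp
  have hc0 : c ≠ 0 := by rw [hc]; exact Complex.exp_ne_zero _
  have ht2 : t ^ 2 = -1 := by rw [ht, hqI]; linear_combination (1 + I) * hI2'
  have ht0 : t ≠ 0 := by intro h; rw [h] at ht2; norm_num at ht2
  have h1I : (1 + I : ℂ) ≠ 0 := by
    intro h
    have := congrArg Complex.im h
    simp at this
  have hI1 : (q + 1 : ℂ) = 1 + I := by rw [hqI]; ring
  set s₂ : ℂ := -2 * t * c ^ 2 / (1 + I) ^ 2 with hs₂
  have hs₂0 : s₂ ≠ 0 := by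
    rw [hs₂]
    apply div_ne_zero
    · exact mul_ne_zero (mul_ne_zero (by norm_num) ht0) (pow_ne_zero _ hc0)
    · exact pow_ne_zero _ h1I
  -- matrix values
  have hAv : (A : Matrix (Fin 2) (Fin 2) ℂ) = c • !![I, 0; 0, -1] := by rw [hA, hqI]
  have hBv : (B : Matrix (Fin 2) (Fin 2) ℂ) = (c / (1 + I)) • !![-1, t; t, -1] := by
    rw [hB, hI1, hqI, hI2']
  have hAiv : ((A⁻¹ : GL (Fin 2) ℂ) : Matrix (Fin 2) (Fin 2) ℂ) = c⁻¹ • !![-I, 0; 0, -1] := by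
    apply inv_val
    rw [hAv]
    exact mat_inv c hc0
  have hm1 : ((B * A⁻¹ ^ 2 * B : GL (Fin 2) ℂ) : Matrix (Fin 2) (Fin 2) ℂ)
      = (-I) • !![(-1:ℂ), 0; 0, 1] := by
    rw [Units.val_mul, Units.val_mul, Units.val_pow_eq_pow_val, hAiv, hBv, pow_two]
    exact mat_m1 t c hc0 ht2 h1I
  have hm2 : ((B ^ 2 : GL (Fin 2) ℂ) : Matrix (Fin 2) (Fin 2) ℂ)
      = s₂ • !![(0:ℂ), 1; 1, 0] := by
    rw [Units.val_pow_eq_pow_val, hBv, hs₂]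
    exact mat_m2 t c hc0 ht2 h1I
  -- relations in GL
  have hm12 : ((B * A⁻¹ ^ 2 * B) * (B ^ 2) : GL (Fin 2) ℂ).val
      = (I * s₂) • !![(0:ℂ), 1; -1, 0] := by
    rw [Units.val_mul, hm1, hm2]
    exact mat_m12 s₂
  have hneg1 : ((-1 : GL (Fin 2) ℂ) : PGL2) = 1 := by
    rw [QuotientGroup.eq_one_iff]
    exact central_of_scalar (-1) _ (by rw [Units.val_neg, Units.val_one]; simp)
  have hx2 : ((B * A⁻¹ ^ 2 * B : GL (Fin 2) ℂ) : PGL2)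
      * ((B * A⁻¹ ^ 2 * B : GL (Fin 2) ℂ) : PGL2) = 1 := by
    rw [← QuotientGroup.mk_mul, QuotientGroup.eq_one_iff]
    refine central_of_scalar (-1) _ ?_
    rw [Units.val_mul, hm1]
    exact mat_m1sq
  have hy2 : ((B ^ 2 : GL (Fin 2) ℂ) : PGL2) * ((B ^ 2 : GL (Fin 2) ℂ) : PGL2) = 1 := by
    rw [← QuotientGroup.mk_mul, QuotientGroup.eq_one_iff]
    refine central_of_scalar (s₂ ^ 2) _ ?_
    rw [Units.val_mul, hm2]
    exact mat_m2sq s₂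
  have hcommGL : (B ^ 2) * (B * A⁻¹ ^ 2 * B) = -((B * A⁻¹ ^ 2 * B) * (B ^ 2)) := by
    refine Units.ext ?_
    rw [Units.val_mul, hm2, hm1, Units.val_neg, Units.val_mul, hm1, hm2]
    exact mat_comm s₂
  have hxy : ((B * A⁻¹ ^ 2 * B : GL (Fin 2) ℂ) : PGL2) * ((B ^ 2 : GL (Fin 2) ℂ) : PGL2)
      = ((B ^ 2 : GL (Fin 2) ℂ) : PGL2) * ((B * A⁻¹ ^ 2 * B : GL (Fin 2) ℂ) : PGL2) := by
    calc ((B * A⁻¹ ^ 2 * B : GL (Fin 2) ℂ) : PGL2) * ((B ^ 2 : GL (Fin 2) ℂ) : PGL2)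
        = ((B * A⁻¹ ^ 2 * B * B ^ 2 : GL (Fin 2) ℂ) : PGL2) := (QuotientGroup.mk_mul _ _ _).symm
      _ = (((-1) * (B * A⁻¹ ^ 2 * B * B ^ 2) : GL (Fin 2) ℂ) : PGL2) := by
            rw [QuotientGroup.mk_mul _ (-1), hneg1, one_mul]
      _ = ((B ^ 2 * (B * A⁻¹ ^ 2 * B) : GL (Fin 2) ℂ) : PGL2) := by
            rw [hcommGL, ← neg_eq_neg_one_mul]
      _ = _ := QuotientGroup.mk_mul _ _ _
  -- nontriviality
  have hxne : ((B * A⁻¹ ^ 2 * B : GL (Fin 2) ℂ) : PGL2) ≠ 1 := by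
    rw [Ne, QuotientGroup.eq_one_iff, Subgroup.mem_center_iff]
    intro h
    have e := congrArg (fun u : GL (Fin 2) ℂ => ((u : Matrix (Fin 2) (Fin 2) ℂ)) 0 1) (h B)
    simp only [Units.val_mul, hm1, hBv] at e
    simp [Matrix.mul_apply, Fin.sum_univ_two] at e
    have h0 : c / (1 + I) * t * I = 0 := by linear_combination (-1/2 : ℂ) * e
    simp [div_eq_zero_iff, hc0, ht0, h1I, Complex.I_ne_zero] at h0
  have hyne : ((B ^ 2 : GL (Fin 2) ℂ) : PGL2) ≠ 1 := by
    rw [Ne, QuotientGroup.eq_one_iff, Subgroup.mem_center_iff]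
    intro h
    have e := congrArg (fun u : GL (Fin 2) ℂ => ((u : Matrix (Fin 2) (Fin 2) ℂ)) 0 1) (h A)
    simp only [Units.val_mul, hm2, hAv] at e
    simp [Matrix.mul_apply, Fin.sum_univ_two] at e
    have h0 : c * s₂ * (1 + I) = 0 := by linear_combination e
    simp [hc0, hs₂0, h1I] at h0
  have hxyne : ((B * A⁻¹ ^ 2 * B : GL (Fin 2) ℂ) : PGL2) * ((B ^ 2 : GL (Fin 2) ℂ) : PGL2) ≠ 1 := by
    rw [← QuotientGroup.mk_mul, Ne, QuotientGroup.eq_one_iff, Subgroup.mem_center_iff]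
    intro h
    have e := congrArg (fun u : GL (Fin 2) ℂ => ((u : Matrix (Fin 2) (Fin 2) ℂ)) 0 1) (h A)
    simp only [Units.val_mul, hm12, hAv] at e
    simp [Matrix.mul_apply, Fin.sum_univ_two] at e
    have hI1' : (I - 1 : ℂ) ≠ 0 := by
      intro hh
      have := congrArg Complex.im hh
      simp at this
    have h0 : c * s₂ * (I - 1) = 0 := by linear_combination e - c * s₂ * hI2'
    simp [hc0, hs₂0, hI1'] at h0
  -- assemble the isomorphism
  have hrange := kleinHom_range ((B * A⁻¹ ^ 2 * B : GL (Fin 2) ℂ) : PGL2)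
    ((B ^ 2 : GL (Fin 2) ℂ) : PGL2) hx2 hy2 hxy
  have hinj := kleinHom_injective ((B * A⁻¹ ^ 2 * B : GL (Fin 2) ℂ) : PGL2)
    ((B ^ 2 : GL (Fin 2) ℂ) : PGL2) hx2 hy2 hxy hxne hyne hxyne
  exact ⟨(MulEquiv.subgroupCongr hrange.symm).trans (MonoidHom.ofInjective hinj).symm⟩
end

section
/- Let ρ(S) and ρ(T) be the (l+1)×(l+1) matrices with entries ρ(S)_{jk} = sqrt(2/(l+2))·sin(πjk/(l+2)) and ρ(T)_{jk} = δ_{jk}·exp(iπ(j²/(2(l+2)) − 1/4)), for 1 ≤ j,k ≤ l+1. Then ρ(S) is unitary, ρ(S)² is a scalar multiple of a permutation matrix of order dividing 2, and (ρ(S)ρ(T))³ is a scalar multiple of ρ(S)². -/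
open Complex Matrix
open Finset


noncomputable def ww (n : ℕ) (a : ℤ) : ℂ := Complex.exp (Real.pi * Complex.I * a / (2 * n))

namespace ww
variable {n : ℕ}
lemma add (a b : ℤ) : ww n (a + b) = ww n a * ww n b := by
  rw [ww, ww, ww, ← Complex.exp_add]; congr 1; push_cast; ring
lemma zero : ww n 0 = 1 := by simp [ww]
lemma mul_nat (a : ℤ) (m : ℕ) : ww n a ^ m = ww n (a * m) := by
  rw [ww, ww, ← Complex.exp_nat_mul]; congr 1; push_cast; ring
lemma eq_one_iff (hn : 0 < n) (a : ℤ) : ww n a = 1 ↔ (4 * (n:ℤ)) ∣ a := by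
  have hπ : (Real.pi : ℂ) * Complex.I ≠ 0 := by
    simp [Real.pi_ne_zero, Complex.I_ne_zero]
  have hn' : ((n:ℂ)) ≠ 0 := by exact_mod_cast hn.ne'
  rw [ww, Complex.exp_eq_one_iff]
  constructor
  · rintro ⟨k, hk⟩
    refine ⟨k, ?_⟩
    have : (a : ℂ) = ((4 * n * k : ℤ) : ℂ) := by
      field_simp at hk
      push_cast
      have h2 : (Real.pi:ℂ) * I * a = (Real.pi:ℂ) * I * (4 * n * k) := by rw [hk]; ring
      exact mul_left_cancel₀ hπ h2
    exact_mod_cast this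
  · rintro ⟨k, hk⟩
    exact ⟨k, by rw [hk]; push_cast; field_simp; ring⟩
lemma eq_of_dvd (hn : 0 < n) {a b : ℤ} (h : (4 * (n:ℤ)) ∣ a - b) : ww n a = ww n b := by
  have h1 : ww n (a - b) = 1 := (eq_one_iff hn _).mpr h
  have := add (n := n) (a - b) b
  simp only [sub_add_cancel] at this
  rw [this, h1, one_mul]
end ww

section sums
variable {n : ℕ}

/-- geometric sum over the full period -/
lemma GEO (hn : 0 < n) (b : ℤ) :
    ∑ m ∈ range (2 * n), ww n (2 * b * m) = if (2 * (n:ℤ)) ∣ b then ((2:ℂ) * n) else 0 := by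
  have key : ∀ m : ℕ, ww n (2 * b * m) = ww n (2 * b) ^ m := fun m => (ww.mul_nat _ m).symm
  simp only [key]
  by_cases h : (2 * (n:ℤ)) ∣ b
  · have h1 : ww n (2 * b) = 1 := (ww.eq_one_iff hn _).mpr (by obtain ⟨t, ht⟩ := h; exact ⟨t, by rw [ht]; ring⟩)
    simp [h1, h]
  · have h1 : ww n (2 * b) ≠ 1 := by
      intro hc
      obtain ⟨t, ht⟩ := (ww.eq_one_iff hn _).mp hc
      refine h ⟨t, ?_⟩
      have h2 : (2:ℤ) * b = 2 * (2 * n * t) := by rw [ht]; ring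
      exact mul_left_cancel₀ (by norm_num) h2
    have h2 : ww n (2 * b) ^ (2 * n) = 1 := by
      rw [ww.mul_nat]
      exact (ww.eq_one_iff hn _).mpr ⟨b, by push_cast; ring⟩
    rw [geom_sum_eq h1, h2, if_neg h]
    simp

/-- split a sum over `range (2n)` at `0`, `n` and pair `m ↔ 2n - m` -/
lemma SPLIT (hn : 0 < n) (f : ℕ → ℂ) :
    ∑ m ∈ range (2 * n), f m
      = f 0 + f n + ∑ i ∈ range (n - 1), (f (i + 1) + f (2 * n - 1 - i)) := by
  have h2n : 2 * n = (n + 1) + (n - 1) := by omega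
  conv_lhs => rw [h2n, Finset.sum_range_add]
  have h1 : ∑ x ∈ range (n + 1), f x = f 0 + (∑ i ∈ range (n - 1), f (i + 1)) + f n := by
    rw [Finset.sum_range_succ' f n]
    have : n = (n - 1) + 1 := by omega
    rw [this, Finset.sum_range_succ]
    have : n - 1 + 1 = n := by omega
    rw [this]
    ring
  have h2 : ∑ x ∈ range (n - 1), f (n + 1 + x) = ∑ i ∈ range (n - 1), f (2 * n - 1 - i) := by
    rw [← Finset.sum_range_reflect (fun i => f (n + 1 + i)) (n - 1)]
    apply Finset.sum_congr rfl
    intro i hi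
    simp only [Finset.mem_range] at hi
    congr 1
    omega
  rw [h1, h2, Finset.sum_add_distrib]
  ring

end sums

section sums2
variable {n : ℕ}

lemma CONG (hn : 0 < n) (a : ℤ) {u v : ℤ} (h : (2 * (n:ℤ)) ∣ u - v) :
    ww n (u ^ 2 + 2 * a * u) = ww n (v ^ 2 + 2 * a * v) := by
  obtain ⟨t, ht⟩ := h
  have hu : u = v + 2 * n * t := by omega
  apply ww.eq_of_dvd hn
  exact ⟨t * (v + n * t + a), by rw [hu]; ring⟩

/-- the paired cosine-type sum -/
lemma Dsum (hn : 0 < n) (b : ℤ) :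
    ∑ i ∈ range (n - 1), (ww n (2 * b * (i + 1)) + ww n (-(2 * b * (i + 1))))
      = (if (2 * (n:ℤ)) ∣ b then ((2:ℂ) * n) else 0) - 1 - ww n (2 * b * n) := by
  have hs := SPLIT hn (fun m => ww n (2 * b * m))
  rw [GEO hn b] at hs
  have he : ∀ i ∈ range (n - 1),
      ww n (2 * b * ((2 * n - 1 - i : ℕ) : ℤ)) = ww n (-(2 * b * (i + 1))) := by
    intro i hi
    simp only [Finset.mem_range] at hi
    apply ww.eq_of_dvd hn
    have hc : ((2 * n - 1 - i : ℕ) : ℤ) = 2 * n - 1 - i := by omega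
    exact ⟨b, by rw [hc]; push_cast; ring⟩
  rw [Finset.sum_congr rfl (fun i hi => by rw [he i hi])] at hs
  push_cast at hs ⊢
  rw [show (2:ℤ) * b * 0 = 0 by ring, ww.zero] at hs
  linear_combination -hs

/-- shift invariance of the Gauss sum, natural shift -/
lemma SHIFTnat (hn : 0 < n) (a : ℕ) :
    ∑ m ∈ range (2 * n), ww n (((m + a : ℕ) : ℤ) ^ 2) = ∑ m ∈ range (2 * n), ww n ((m : ℤ) ^ 2) := by
  induction a with
  | zero => simp
  | succ a ih =>
    have step : ∑ m ∈ range (2 * n), ww n (((m + (a+1) : ℕ) : ℤ) ^ 2)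
        = ∑ m ∈ range (2 * n), ww n (((m + a : ℕ) : ℤ) ^ 2) := by
      have h1 := Finset.sum_range_succ' (fun m => ww n (((m + a : ℕ) : ℤ) ^ 2)) (2 * n)
      have h2 := Finset.sum_range_succ (fun m => ww n (((m + a : ℕ) : ℤ) ^ 2)) (2 * n)
      have h3 : ww n (((2 * n + a : ℕ) : ℤ) ^ 2) = ww n (((0 + a : ℕ) : ℤ) ^ 2) := by
        have := CONG hn 0 (u := ((2 * n + a : ℕ) : ℤ)) (v := ((0 + a : ℕ) : ℤ)) ⟨1, by push_cast; ring⟩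
        simpa using this
      have h4 : ∀ m : ℕ, ((m + 1 + a : ℕ) : ℤ) = ((m + (a + 1) : ℕ) : ℤ) := by intro m; push_cast; ring
      simp only [h4] at h1
      rw [h2, h3] at h1
      simpa using h1.symm
    rw [step, ih]

/-- shift invariance, integer shift -/
lemma SHIFTint (hn : 0 < n) (a : ℤ) :
    ∑ m ∈ range (2 * n), ww n (((m : ℤ) + a) ^ 2) = ∑ m ∈ range (2 * n), ww n ((m : ℤ) ^ 2) := by
  set b : ℤ := a + 2 * n * a.natAbs with hb
  have hb0 : 0 ≤ b := by
    have hA : (0:ℤ) ≤ (a.natAbs : ℤ) := by positivity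
    have hn1 : (1:ℤ) ≤ (n:ℤ) := by exact_mod_cast hn
    have h1 : (a.natAbs : ℤ) ≤ 2 * (n:ℤ) * a.natAbs := by nlinarith
    have h2 : -a ≤ (a.natAbs : ℤ) := by omega
    rw [hb]
    linarith
  have heq : ∀ m : ℕ, ww n (((m : ℤ) + a) ^ 2) = ww n (((m + b.toNat : ℕ) : ℤ) ^ 2) := by
    intro m
    have hc : ((m + b.toNat : ℕ) : ℤ) = m + b := by
      rw [Nat.cast_add, Int.toNat_of_nonneg hb0]
    rw [hc]
    have := CONG hn 0 (u := (m : ℤ) + a) (v := (m : ℤ) + b) ⟨-(a.natAbs), by rw [hb]; ring⟩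
    simpa using this
  rw [Finset.sum_congr rfl (fun m _ => heq m), SHIFTnat hn b.toNat]

/-- Gauss sum with linear term -/
lemma GS (hn : 0 < n) (a : ℤ) :
    ∑ m ∈ range (2 * n), ww n ((m : ℤ) ^ 2 + 2 * a * m)
      = ww n (-(a ^ 2)) * ∑ m ∈ range (2 * n), ww n ((m : ℤ) ^ 2) := by
  have h1 : ∀ m : ℕ, ww n ((m : ℤ) ^ 2 + 2 * a * m) = ww n (-(a ^ 2)) * ww n (((m : ℤ) + a) ^ 2) := by
    intro m
    rw [← ww.add]
    congr 1
    ring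
  rw [Finset.sum_congr rfl (fun m _ => h1 m), ← Finset.mul_sum, SHIFTint hn a]

/-- the quadratic paired sum -/
lemma Qsum (hn : 0 < n) (a : ℤ) :
    ∑ i ∈ range (n - 1), (ww n (((i:ℤ) + 1) ^ 2 + 2 * a * ((i:ℤ) + 1)) + ww n (((i:ℤ) + 1) ^ 2 - 2 * a * ((i:ℤ) + 1)))
      = ww n (-(a ^ 2)) * (∑ m ∈ range (2 * n), ww n ((m : ℤ) ^ 2))
        - 1 - ww n ((n:ℤ) ^ 2 + 2 * a * n) := by
  have hs := SPLIT hn (fun m => ww n ((m : ℤ) ^ 2 + 2 * a * m))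
  rw [GS hn a] at hs
  have he : ∑ i ∈ range (n - 1),
      (ww n (((i + 1 : ℕ) : ℤ) ^ 2 + 2 * a * ((i + 1 : ℕ) : ℤ))
        + ww n (((2 * n - 1 - i : ℕ) : ℤ) ^ 2 + 2 * a * ((2 * n - 1 - i : ℕ) : ℤ)))
      = ∑ i ∈ range (n - 1),
      (ww n (((i:ℤ) + 1) ^ 2 + 2 * a * ((i:ℤ) + 1)) + ww n (((i:ℤ) + 1) ^ 2 - 2 * a * ((i:ℤ) + 1))) := by
    apply Finset.sum_congr rfl
    intro i hi
    simp only [Finset.mem_range] at hi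
    have hc : ((2 * n - 1 - i : ℕ) : ℤ) = 2 * n - 1 - i := by omega
    have harg : ((i + 1 : ℕ) : ℤ) ^ 2 + 2 * a * ((i + 1 : ℕ) : ℤ)
        = ((i:ℤ) + 1) ^ 2 + 2 * a * ((i:ℤ) + 1) := by push_cast; ring
    have hsnd : ww n (((2 * n - 1 - i : ℕ) : ℤ) ^ 2 + 2 * a * ((2 * n - 1 - i : ℕ) : ℤ))
        = ww n (((i:ℤ) + 1) ^ 2 - 2 * a * ((i:ℤ) + 1)) :=
      ww.eq_of_dvd hn ⟨(n:ℤ) - i - 1 + a, by rw [hc]; push_cast; ring⟩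
    rw [harg, hsnd]
  rw [he] at hs
  rw [show ((0:ℕ):ℤ) ^ 2 + 2 * a * ((0:ℕ):ℤ) = 0 by push_cast; ring, ww.zero] at hs
  push_cast at hs ⊢
  linear_combination -hs

section trig
variable {n : ℕ}

lemma sinw (hn : 0 < n) (a : ℤ) :
    ((Real.sin (Real.pi * a / n) : ℝ) : ℂ) = (ww n (-(2*a)) - ww n (2*a)) * I / 2 := by
  have hn' : ((n:ℂ)) ≠ 0 := by exact_mod_cast hn.ne'
  rw [Complex.ofReal_sin, Complex.sin]
  have h1 : -((Real.pi * a / n : ℝ) : ℂ) * I = Real.pi * Complex.I * ((-(2*a) : ℤ) : ℂ) / (2 * n) := by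
    push_cast; field_simp
  have h2 : ((Real.pi * a / n : ℝ) : ℂ) * I = Real.pi * Complex.I * ((2*a : ℤ) : ℂ) / (2 * n) := by
    push_cast; field_simp
  rw [h1, h2, ww, ww]

lemma prod_expand (J K M : ℤ) :
    ((ww n (-(2*(J*M))) - ww n (2*(J*M))) * I / 2) * ((ww n (-(2*(M*K))) - ww n (2*(M*K))) * I / 2)
      = (-(1/4 : ℂ)) * ((ww n (2*(J+K)*M) + ww n (-(2*(J+K)*M)))
          - (ww n (2*(J-K)*M) + ww n (-(2*(J-K)*M)))) := by
  have e1 : ww n (2*(J+K)*M) = ww n (2*(J*M)) * ww n (2*(M*K)) := by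
    rw [← ww.add]; congr 1; ring
  have e2 : ww n (-(2*(J+K)*M)) = ww n (-(2*(J*M))) * ww n (-(2*(M*K))) := by
    rw [← ww.add]; congr 1; ring
  have e3 : ww n (2*(J-K)*M) = ww n (2*(J*M)) * ww n (-(2*(M*K))) := by
    rw [← ww.add]; congr 1; ring
  have e4 : ww n (-(2*(J-K)*M)) = ww n (-(2*(J*M))) * ww n (2*(M*K)) := by
    rw [← ww.add]; congr 1; ring
  rw [e1, e2, e3, e4]
  have hI : (I:ℂ)^2 = -1 := Complex.I_sq
  linear_combination ((ww n (-(2*(J*M))) - ww n (2*(J*M))) * (ww n (-(2*(M*K))) - ww n (2*(M*K))) / 4) * hI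

end trig

section keys
variable {n : ℕ}

lemma KEY1 (hn : 0 < n) (J K : ℕ) (hJ1 : 1 ≤ J) (hJ : J ≤ n - 1) (hK1 : 1 ≤ K) (hK : K ≤ n - 1) :
    ∑ i ∈ range (n - 1), (((ww n (-(2*((J:ℤ)*(i+1)))) - ww n (2*((J:ℤ)*(i+1)))) * I / 2)
        * ((ww n (-(2*(((i:ℤ)+1)*(K:ℤ)))) - ww n (2*(((i:ℤ)+1)*(K:ℤ)))) * I / 2))
      = if J = K then (n:ℂ)/2 else 0 := by
  have hn2 : 2 ≤ n := by omega
  simp only [prod_expand (n := n) (J:ℤ) (K:ℤ)]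
  rw [← Finset.mul_sum, Finset.sum_sub_distrib]
  rw [Dsum hn ((J:ℤ)+(K:ℤ)), Dsum hn ((J:ℤ)-(K:ℤ))]
  have hnd1 : ¬ ((2 * (n:ℤ)) ∣ ((J:ℤ)+(K:ℤ))) := by
    intro h
    have h1 := Int.le_of_dvd (by omega) h
    omega
  have hw : ww n (2 * ((J:ℤ)+(K:ℤ)) * n) = ww n (2 * ((J:ℤ)-(K:ℤ)) * n) :=
    ww.eq_of_dvd hn ⟨(K:ℤ), by push_cast; ring⟩
  rw [if_neg hnd1, hw]
  by_cases hJK : J = K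
  · subst hJK
    rw [if_pos (by simp), if_pos rfl]
    push_cast
    ring
  · have hnd2 : ¬ ((2 * (n:ℤ)) ∣ ((J:ℤ)-(K:ℤ))) := by
      intro h
      have h0 : (J:ℤ) - K = 0 := Int.eq_zero_of_abs_lt_dvd h (by rw [abs_lt]; omega)
      omega
    rw [if_neg hnd2, if_neg hJK]
    ring

lemma KEY2 (hn : 0 < n) (J K : ℕ) (hJ1 : 1 ≤ J) (hJ : J ≤ n - 1) (hK1 : 1 ≤ K) (hK : K ≤ n - 1) :
    ∑ i ∈ range (n - 1), (ww n (((i:ℤ)+1)^2) * (((ww n (-(2*((J:ℤ)*(i+1)))) - ww n (2*((J:ℤ)*(i+1)))) * I / 2)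
        * ((ww n (-(2*(((i:ℤ)+1)*(K:ℤ)))) - ww n (2*(((i:ℤ)+1)*(K:ℤ)))) * I / 2)))
      = (∑ m ∈ range (2 * n), ww n ((m : ℤ) ^ 2)) / 2 * I * ww n (-((J:ℤ)^2)) * ww n (-((K:ℤ)^2))
          * ((ww n (-(2*((J:ℤ)*(K:ℤ)))) - ww n (2*((J:ℤ)*(K:ℤ)))) * I / 2) := by
  have step1 : ∀ i : ℕ, ww n (((i:ℤ)+1)^2) * (((ww n (-(2*((J:ℤ)*(i+1)))) - ww n (2*((J:ℤ)*(i+1)))) * I / 2)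
        * ((ww n (-(2*(((i:ℤ)+1)*(K:ℤ)))) - ww n (2*(((i:ℤ)+1)*(K:ℤ)))) * I / 2))
      = (-(1/4 : ℂ)) * ((ww n (((i:ℤ)+1)^2 + 2*((J:ℤ)+(K:ℤ))*((i:ℤ)+1)) + ww n (((i:ℤ)+1)^2 - 2*((J:ℤ)+(K:ℤ))*((i:ℤ)+1)))
          - (ww n (((i:ℤ)+1)^2 + 2*((J:ℤ)-(K:ℤ))*((i:ℤ)+1)) + ww n (((i:ℤ)+1)^2 - 2*((J:ℤ)-(K:ℤ))*((i:ℤ)+1)))) := by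
    intro i
    rw [prod_expand (n := n) (J:ℤ) (K:ℤ) ((i:ℤ)+1)]
    have f1 : ww n (((i:ℤ)+1)^2 + 2*((J:ℤ)+(K:ℤ))*((i:ℤ)+1)) = ww n (((i:ℤ)+1)^2) * ww n (2*((J:ℤ)+(K:ℤ))*((i:ℤ)+1)) := by
      rw [← ww.add]
    have f2 : ww n (((i:ℤ)+1)^2 - 2*((J:ℤ)+(K:ℤ))*((i:ℤ)+1)) = ww n (((i:ℤ)+1)^2) * ww n (-(2*((J:ℤ)+(K:ℤ))*((i:ℤ)+1))) := by
      rw [← ww.add]; exact congrArg (ww n) (by ring)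
    have f3 : ww n (((i:ℤ)+1)^2 + 2*((J:ℤ)-(K:ℤ))*((i:ℤ)+1)) = ww n (((i:ℤ)+1)^2) * ww n (2*((J:ℤ)-(K:ℤ))*((i:ℤ)+1)) := by
      rw [← ww.add]
    have f4 : ww n (((i:ℤ)+1)^2 - 2*((J:ℤ)-(K:ℤ))*((i:ℤ)+1)) = ww n (((i:ℤ)+1)^2) * ww n (-(2*((J:ℤ)-(K:ℤ))*((i:ℤ)+1))) := by
      rw [← ww.add]; exact congrArg (ww n) (by ring)
    rw [f1, f2, f3, f4]
    ring
  rw [Finset.sum_congr rfl (fun i _ => step1 i)]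
  rw [← Finset.mul_sum, Finset.sum_sub_distrib]
  rw [Qsum hn ((J:ℤ)+(K:ℤ)), Qsum hn ((J:ℤ)-(K:ℤ))]
  have hw : ww n ((n:ℤ)^2 + 2*((J:ℤ)+(K:ℤ))*n) = ww n ((n:ℤ)^2 + 2*((J:ℤ)-(K:ℤ))*n) :=
    ww.eq_of_dvd hn ⟨(K:ℤ), by push_cast; ring⟩
  rw [hw]
  have g1 : ww n (-(((J:ℤ)+(K:ℤ))^2)) = ww n (-((J:ℤ)^2)) * ww n (-((K:ℤ)^2)) * ww n (-(2*((J:ℤ)*(K:ℤ)))) := by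
    rw [← ww.add, ← ww.add]; congr 1; ring
  have g2 : ww n (-(((J:ℤ)-(K:ℤ))^2)) = ww n (-((J:ℤ)^2)) * ww n (-((K:ℤ)^2)) * ww n (2*((J:ℤ)*(K:ℤ))) := by
    rw [← ww.add, ← ww.add]; congr 1; ring
  rw [g1, g2]
  have hI : (I:ℂ)^2 = -1 := Complex.I_sq
  linear_combination ((∑ m ∈ range (2 * n), ww n ((m : ℤ) ^ 2)) / 2 * ww n (-((J:ℤ)^2)) * ww n (-((K:ℤ)^2)) * ((ww n (-(2*((J:ℤ)*(K:ℤ)))) - ww n (2*((J:ℤ)*(K:ℤ)))) / 2)) * hI + (ww n (-((J:ℤ)^2)) * ww n (-((K:ℤ)^2)) * (∑ m ∈ range (2 * n), ww n ((m : ℤ) ^ 2)) * (ww n (2*((J:ℤ)*(K:ℤ))) - ww n (-(2*((J:ℤ)*(K:ℤ))))) / 2) * hI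
end keys

section entry
variable (l : ℕ)

lemma ORTHO (J K : ℕ) (hJ1 : 1 ≤ J) (hJ : J ≤ l + 1) (hK1 : 1 ≤ K) (hK : K ≤ l + 1) :
    ∑ i ∈ range (l + 1),
      (((Real.sqrt (2/((l:ℝ)+2)) * Real.sin (Real.pi * (J:ℝ) * ((i:ℝ)+1) / ((l:ℝ)+2)) : ℝ):ℂ)
        * ((Real.sqrt (2/((l:ℝ)+2)) * Real.sin (Real.pi * ((i:ℝ)+1) * (K:ℝ) / ((l:ℝ)+2)) : ℝ):ℂ))
      = if J = K then 1 else 0 := by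
  have hn : 0 < l + 2 := by omega
  have hstep : ∀ i ∈ range (l + 1),
      (((Real.sqrt (2/((l:ℝ)+2)) * Real.sin (Real.pi * (J:ℝ) * ((i:ℝ)+1) / ((l:ℝ)+2)) : ℝ):ℂ)
        * ((Real.sqrt (2/((l:ℝ)+2)) * Real.sin (Real.pi * ((i:ℝ)+1) * (K:ℝ) / ((l:ℝ)+2)) : ℝ):ℂ))
      = (((2:ℝ)/((l:ℝ)+2) : ℝ) : ℂ) *
        (((ww (l+2) (-(2*((J:ℤ)*(i+1)))) - ww (l+2) (2*((J:ℤ)*(i+1)))) * I / 2)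
          * ((ww (l+2) (-(2*(((i:ℤ)+1)*(K:ℤ)))) - ww (l+2) (2*(((i:ℤ)+1)*(K:ℤ)))) * I / 2)) := by
    intro i _
    have harg1 : Real.pi * (J:ℝ) * ((i:ℝ)+1) / ((l:ℝ)+2)
        = Real.pi * ((((J:ℤ)*((i:ℤ)+1)) : ℤ):ℝ) / ((l+2 : ℕ):ℝ) := by push_cast; ring
    have harg2 : Real.pi * ((i:ℝ)+1) * (K:ℝ) / ((l:ℝ)+2)
        = Real.pi * (((((i:ℤ)+1)*(K:ℤ)) : ℤ):ℝ) / ((l+2 : ℕ):ℝ) := by push_cast; ring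
    rw [Complex.ofReal_mul, Complex.ofReal_mul, harg1, harg2,
      sinw hn ((J:ℤ)*((i:ℤ)+1)), sinw hn (((i:ℤ)+1)*(K:ℤ))]
    have hsq : ((Real.sqrt (2/((l:ℝ)+2)) : ℝ):ℂ) * ((Real.sqrt (2/((l:ℝ)+2)) : ℝ):ℂ)
        = (((2:ℝ)/((l:ℝ)+2) : ℝ) : ℂ) := by
      rw [← Complex.ofReal_mul, Real.mul_self_sqrt (by positivity)]
    linear_combination ((ww (l+2) (-(2*((J:ℤ)*((i:ℤ)+1)))) - ww (l+2) (2*((J:ℤ)*((i:ℤ)+1)))) * I / 2)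
      * ((ww (l+2) (-(2*(((i:ℤ)+1)*(K:ℤ)))) - ww (l+2) (2*(((i:ℤ)+1)*(K:ℤ)))) * I / 2) * hsq
  rw [Finset.sum_congr rfl hstep, ← Finset.mul_sum]
  have hK1' := KEY1 hn J K hJ1 (by omega) hK1 (by omega)
  have hr : l + 2 - 1 = l + 1 := rfl
  rw [hr] at hK1'
  rw [hK1']
  by_cases h : J = K
  · rw [if_pos h, if_pos h]
    have h2 : ((l:ℂ)+2) ≠ 0 := by
      have : ((l:ℂ)+2) = ((l+2 : ℕ):ℂ) := by push_cast; ring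
      rw [this]
      exact_mod_cast (by omega : l + 2 ≠ 0)
    push_cast
    field_simp
  · rw [if_neg h, if_neg h, mul_zero]

end entry

lemma INNER (l J K : ℕ) (hJ1 : 1 ≤ J) (hJ : J ≤ l + 1) (hK1 : 1 ≤ K) (hK : K ≤ l + 1) :
    ∑ i ∈ range (l + 1),
      (((Real.sqrt (2/((l:ℝ)+2)) * Real.sin (Real.pi * (J:ℝ) * ((i:ℝ)+1) / ((l:ℝ)+2)) : ℝ):ℂ)
        * ww (l+2) (((i:ℤ)+1)^2)
        * ((Real.sqrt (2/((l:ℝ)+2)) * Real.sin (Real.pi * ((i:ℝ)+1) * (K:ℝ) / ((l:ℝ)+2)) : ℝ):ℂ))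
      = (((2:ℝ)/((l:ℝ)+2) : ℝ) : ℂ) *
          ((∑ m ∈ range (2 * (l+2)), ww (l+2) ((m : ℤ) ^ 2)) / 2 * I * ww (l+2) (-((J:ℤ)^2)) * ww (l+2) (-((K:ℤ)^2))
            * ((ww (l+2) (-(2*((J:ℤ)*(K:ℤ)))) - ww (l+2) (2*((J:ℤ)*(K:ℤ)))) * I / 2)) := by
  have hn : 0 < l + 2 := by omega
  have hstep : ∀ i ∈ range (l + 1),
      (((Real.sqrt (2/((l:ℝ)+2)) * Real.sin (Real.pi * (J:ℝ) * ((i:ℝ)+1) / ((l:ℝ)+2)) : ℝ):ℂ)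
        * ww (l+2) (((i:ℤ)+1)^2)
        * ((Real.sqrt (2/((l:ℝ)+2)) * Real.sin (Real.pi * ((i:ℝ)+1) * (K:ℝ) / ((l:ℝ)+2)) : ℝ):ℂ))
      = (((2:ℝ)/((l:ℝ)+2) : ℝ) : ℂ) *
        (ww (l+2) (((i:ℤ)+1)^2) * (((ww (l+2) (-(2*((J:ℤ)*(i+1)))) - ww (l+2) (2*((J:ℤ)*(i+1)))) * I / 2)
          * ((ww (l+2) (-(2*(((i:ℤ)+1)*(K:ℤ)))) - ww (l+2) (2*(((i:ℤ)+1)*(K:ℤ)))) * I / 2))) := by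
    intro i _
    have harg1 : Real.pi * (J:ℝ) * ((i:ℝ)+1) / ((l:ℝ)+2)
        = Real.pi * ((((J:ℤ)*((i:ℤ)+1)) : ℤ):ℝ) / ((l+2 : ℕ):ℝ) := by push_cast; ring
    have harg2 : Real.pi * ((i:ℝ)+1) * (K:ℝ) / ((l:ℝ)+2)
        = Real.pi * (((((i:ℤ)+1)*(K:ℤ)) : ℤ):ℝ) / ((l+2 : ℕ):ℝ) := by push_cast; ring
    rw [Complex.ofReal_mul, Complex.ofReal_mul, harg1, harg2,
      sinw hn ((J:ℤ)*((i:ℤ)+1)), sinw hn (((i:ℤ)+1)*(K:ℤ))]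
    have hsq : ((Real.sqrt (2/((l:ℝ)+2)) : ℝ):ℂ) * ((Real.sqrt (2/((l:ℝ)+2)) : ℝ):ℂ)
        = (((2:ℝ)/((l:ℝ)+2) : ℝ) : ℂ) := by
      rw [← Complex.ofReal_mul, Real.mul_self_sqrt (by positivity)]
    linear_combination (ww (l+2) (((i:ℤ)+1)^2) * ((ww (l+2) (-(2*((J:ℤ)*((i:ℤ)+1)))) - ww (l+2) (2*((J:ℤ)*((i:ℤ)+1)))) * I / 2)
      * ((ww (l+2) (-(2*(((i:ℤ)+1)*(K:ℤ)))) - ww (l+2) (2*(((i:ℤ)+1)*(K:ℤ)))) * I / 2)) * hsq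
  rw [Finset.sum_congr rfl hstep, ← Finset.mul_sum]
  have hK2' := KEY2 hn J K hJ1 (by omega) hK1 (by omega)
  have hr : l + 2 - 1 = l + 1 := rfl
  rw [hr] at hK2'
  rw [hK2']

/-- The modular `S` and `T` matrices of the level-`l` `SU(2)` WZW characters:
`S` is unitary, `S²` is a scalar multiple of a permutation matrix of order dividing
`2`, and `(ST)³` is a scalar multiple of `S²`; i.e. they give a projective
representation of `PSL(2,ℤ) = ⟨S, T | S² = (ST)³ = e⟩`. -/
theorem stmt_18 (l : ℕ) (hl : 1 ≤ l)
    (S T : Matrix (Fin (l + 1)) (Fin (l + 1)) ℂ)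
    (hS : ∀ j k : Fin (l + 1), S j k =
      ((Real.sqrt (2 / (l + 2)) *
        Real.sin (Real.pi * (j.1 + 1) * (k.1 + 1) / (l + 2)) : ℝ) : ℂ))
    (hT : ∀ j k : Fin (l + 1), T j k =
      if j = k then
        Complex.exp (Real.pi * I * (((j.1 + 1 : ℕ) : ℂ) ^ 2 / (2 * (l + 2)) - 1 / 4))
      else 0) :
    S ∈ Matrix.unitaryGroup (Fin (l + 1)) ℂ ∧
    (∃ (c : ℂ) (σ : Equiv.Perm (Fin (l + 1))), σ ^ 2 = 1 ∧
      S ^ 2 = c • (σ.permMatrix ℂ)) ∧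
    (∃ c : ℂ, (S * T) ^ 3 = c • S ^ 2) := by
  have hn : 0 < l + 2 := by omega
  -- S * S = 1
  have hSS : S * S = 1 := by
    ext j k
    rw [Matrix.mul_apply, Matrix.one_apply]
    have horto := ORTHO l (j.1+1) (k.1+1) (by omega) (by omega) (by omega) (by omega)
    have hc1 : ((j.1+1 : ℕ):ℝ) = (j.1:ℝ)+1 := by push_cast; ring
    have hc2 : ((k.1+1 : ℕ):ℝ) = (k.1:ℝ)+1 := by push_cast; ring
    simp only [hc1, hc2] at horto
    calc ∑ m : Fin (l+1), S j m * S m k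
        = ∑ m : Fin (l+1), (fun i : ℕ =>
            ((Real.sqrt (2/((l:ℝ)+2)) * Real.sin (Real.pi * ((j.1:ℝ)+1) * ((i:ℝ)+1) / ((l:ℝ)+2)) : ℝ):ℂ)
            * ((Real.sqrt (2/((l:ℝ)+2)) * Real.sin (Real.pi * ((i:ℝ)+1) * ((k.1:ℝ)+1) / ((l:ℝ)+2)) : ℝ):ℂ)) m.1 :=
          Finset.sum_congr rfl (fun m _ => by rw [hS j m, hS m k])
      _ = ∑ i ∈ range (l+1), (fun i : ℕ =>
            ((Real.sqrt (2/((l:ℝ)+2)) * Real.sin (Real.pi * ((j.1:ℝ)+1) * ((i:ℝ)+1) / ((l:ℝ)+2)) : ℝ):ℂ)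
            * ((Real.sqrt (2/((l:ℝ)+2)) * Real.sin (Real.pi * ((i:ℝ)+1) * ((k.1:ℝ)+1) / ((l:ℝ)+2)) : ℝ):ℂ)) i :=
          Fin.sum_univ_eq_sum_range (fun i : ℕ =>
            ((Real.sqrt (2/((l:ℝ)+2)) * Real.sin (Real.pi * ((j.1:ℝ)+1) * ((i:ℝ)+1) / ((l:ℝ)+2)) : ℝ):ℂ)
            * ((Real.sqrt (2/((l:ℝ)+2)) * Real.sin (Real.pi * ((i:ℝ)+1) * ((k.1:ℝ)+1) / ((l:ℝ)+2)) : ℝ):ℂ)) (l+1)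
      _ = if j.1+1 = k.1+1 then 1 else 0 := horto
      _ = if j = k then 1 else 0 := by
          rcases eq_or_ne j k with h | h
          · rw [if_pos (by omega), if_pos h]
          · rw [if_neg (by simp [Fin.ext_iff] at h ⊢; omega), if_neg h]
    -- done
  have hstar : star S = S := by
    ext j k
    rw [Matrix.star_apply, hS k j, hS j k, Complex.star_def, Complex.conj_ofReal]
    congr 2
    ring
  refine ⟨?_, ?_, ?_⟩
  · rw [Matrix.mem_unitaryGroup_iff, hstar, hSS]
  · refine ⟨1, 1, one_pow 2, ?_⟩
    rw [pow_two, hSS, one_smul]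
    ext i j
    simp [Equiv.Perm.permMatrix, PEquiv.toMatrix_apply, Matrix.one_apply, Equiv.toPEquiv]
  · -- part 3
    set G : ℂ := ∑ m ∈ range (2 * (l+2)), ww (l+2) ((m : ℤ) ^ 2) with hG
    set φ : ℂ := Complex.exp (-((Real.pi:ℂ) * I) / 4) with hφ
    set sC : ℂ := ((Real.sqrt (2/((l:ℝ)+2)) : ℝ) : ℂ) with hsC
    set c : ℂ := φ^3 * sC * (G/2) * I with hc
    have hl2 : ((l:ℂ)+2) ≠ 0 := by
      have h0 : ((l:ℂ)+2) = ((l+2 : ℕ):ℂ) := by push_cast; ring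
      rw [h0]
      exact_mod_cast (by omega : l + 2 ≠ 0)
    -- T is diagonal
    set d : Fin (l+1) → ℂ := fun j =>
      Complex.exp ((Real.pi:ℂ) * I * (((j.1 + 1 : ℕ) : ℂ) ^ 2 / (2 * ((l:ℂ) + 2)) - 1 / 4)) with hd
    have hTd : T = Matrix.diagonal d := by
      ext j k
      rw [hT j k, Matrix.diagonal_apply]
    have hdm : ∀ m : Fin (l+1), d m = ww (l+2) (((m.1:ℤ)+1)^2) * φ := by
      intro m
      rw [hd]
      simp only []
      rw [ww, hφ, ← Complex.exp_add]
      congr 1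
      push_cast
      field_simp
      ring
    -- the key matrix identity
    have hM : T * (S * T * S) * T = c • S := by
      ext j k
      rw [Matrix.smul_apply, smul_eq_mul, hTd, Matrix.mul_diagonal, Matrix.diagonal_mul,
        Matrix.mul_apply]
      simp only [Matrix.mul_diagonal]
      have hinner := INNER l (j.1+1) (k.1+1) (by omega) (by omega) (by omega) (by omega)
      have hc1 : ((j.1+1 : ℕ):ℝ) = (j.1:ℝ)+1 := by push_cast; ring
      have hc2 : ((k.1+1 : ℕ):ℝ) = (k.1:ℝ)+1 := by push_cast; ring
      simp only [hc1, hc2] at hinner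
      have hsum : ∑ m : Fin (l+1), S j m * d m * S m k
          = φ * (∑ i ∈ range (l+1),
            (((Real.sqrt (2/((l:ℝ)+2)) * Real.sin (Real.pi * ((j.1:ℝ)+1) * ((i:ℝ)+1) / ((l:ℝ)+2)) : ℝ):ℂ)
              * ww (l+2) (((i:ℤ)+1)^2)
              * ((Real.sqrt (2/((l:ℝ)+2)) * Real.sin (Real.pi * ((i:ℝ)+1) * ((k.1:ℝ)+1) / ((l:ℝ)+2)) : ℝ):ℂ))) := by
        rw [Finset.mul_sum]
        rw [← Fin.sum_univ_eq_sum_range (fun i : ℕ => φ *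
            (((Real.sqrt (2/((l:ℝ)+2)) * Real.sin (Real.pi * ((j.1:ℝ)+1) * ((i:ℝ)+1) / ((l:ℝ)+2)) : ℝ):ℂ)
              * ww (l+2) (((i:ℤ)+1)^2)
              * ((Real.sqrt (2/((l:ℝ)+2)) * Real.sin (Real.pi * ((i:ℝ)+1) * ((k.1:ℝ)+1) / ((l:ℝ)+2)) : ℝ):ℂ))) (l+1)]
        apply Finset.sum_congr rfl
        intro m _
        rw [hS j m, hS m k, hdm m]
        ring
      rw [hsum, hinner]
      -- final scalar identity
      have hSjk : S j k = sC * ((ww (l+2) (-(2*(((j.1+1:ℕ):ℤ)*((k.1+1:ℕ):ℤ)))) 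
          - ww (l+2) (2*(((j.1+1:ℕ):ℤ)*((k.1+1:ℕ):ℤ)))) * I / 2) := by
        rw [hS j k, Complex.ofReal_mul, hsC]
        congr 1
        have harg : Real.pi * ((j.1:ℝ)+1) * ((k.1:ℝ)+1) / ((l:ℝ)+2)
            = Real.pi * (((((j.1+1:ℕ):ℤ)*((k.1+1:ℕ):ℤ)) : ℤ):ℝ) / ((l+2 : ℕ):ℝ) := by push_cast; ring
        rw [harg, sinw hn (((j.1+1:ℕ):ℤ)*((k.1+1:ℕ):ℤ))]
      have hsq : sC * sC = (((2:ℝ)/((l:ℝ)+2) : ℝ) : ℂ) := by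
        rw [hsC, ← Complex.ofReal_mul, Real.mul_self_sqrt (by positivity)]
      have hcanJ : ww (l+2) (((j.1:ℤ)+1)^2) * ww (l+2) (-(((j.1+1:ℕ):ℤ)^2)) = 1 := by
        rw [← ww.add]
        rw [show (((j.1:ℤ)+1)^2 + -(((j.1+1:ℕ):ℤ)^2)) = 0 by push_cast; ring]
        exact ww.zero
      have hcanK : ww (l+2) (((k.1:ℤ)+1)^2) * ww (l+2) (-(((k.1+1:ℕ):ℤ)^2)) = 1 := by
        rw [← ww.add]
        rw [show (((k.1:ℤ)+1)^2 + -(((k.1+1:ℕ):ℤ)^2)) = 0 by push_cast; ring]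
        exact ww.zero
      rw [hdm j, hdm k, hSjk, hc]
      set P : ℂ := ((ww (l+2) (-(2*(((j.1+1:ℕ):ℤ)*((k.1+1:ℕ):ℤ)))) 
          - ww (l+2) (2*(((j.1+1:ℕ):ℤ)*((k.1+1:ℕ):ℤ)))) * I / 2) with hP
      linear_combination (-(ww (l+2) (((j.1:ℤ)+1)^2) * φ * φ * ((G/2) * I
            * ww (l+2) (-(((j.1+1:ℕ):ℤ)^2)) * ww (l+2) (-(((k.1+1:ℕ):ℤ)^2)) * P)
            * (ww (l+2) (((k.1:ℤ)+1)^2) * φ))) * hsq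
        + (φ^3 * sC * sC * (G/2) * I * P * (ww (l+2) (((k.1:ℤ)+1)^2) * ww (l+2) (-(((k.1+1:ℕ):ℤ)^2)))) * hcanJ
        + (φ^3 * sC * sC * (G/2) * I * P) * hcanK
    refine ⟨c, ?_⟩
    calc (S*T)^3 = S * (T * (S * T * S) * T) := by

          simp only [pow_succ, pow_zero, one_mul, Matrix.mul_assoc]
      _ = S * (c • S) := by rw [hM]
      _ = c • (S * S) := by rw [Matrix.mul_smul]
      _ = c • S^2 := by rw [pow_two]
end sums2
end
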